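/- Let M be a model category and consider a commutative square with corners P, X, Y, B, with maps P → X, P → Y, f : X → B, g : Y → B. Suppose f factors as a weak equivalence X → X' followed by a fibration X' → B, and g factors as a weak equivalence Y → Y' followed by a fibration Y' → B, and that the induced map P → X' ×_B Y' is a weak equivalence. Then for any other choice of factorizations of f and g into a weak equivalence followed by a fibration, say X → X'' → B and Y → Y'' → B, the induced map P → X'' ×_B Y'' is also a weak equivalence. -/

import Mathlib

open CategoryTheory CategoryTheory.Limits

universe v u

namespace Paper

variable {M : Type u} [Category.{v} M]

/-- A map `f : X ⟶ Y` is *sharp* with respect to a class `W` of weak equivalences if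
for every diagram of two composable pullback squares `A → A' → X` over `B → B' → Y`
in which `j : B ⟶ B'` is a weak equivalence, the induced map `i : A ⟶ A'` is a weak
equivalence. -/
def Sharp (W : MorphismProperty M) {X Y : M} (f : X ⟶ Y) : Prop :=
  ∀ ⦃A A' B B' : M⦄ (i : A ⟶ A') (p : A ⟶ B) (t' : A' ⟶ X) (p' : A' ⟶ B')
    (j : B ⟶ B') (g' : B' ⟶ Y),
    IsPullback t' p' f g' → IsPullback i p p' j → W j → W i

/-- The data and axioms of a (closed) model category structure on a category `M`:
classes of weak equivalences, cofibrations and fibrations, satisfying two-out-of-three,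
closure under retracts, the lifting axioms, and the factorization axioms. -/
structure ModelStructure (M : Type u) [Category.{v} M] where
  W : MorphismProperty M
  Cof : MorphismProperty M
  Fib : MorphismProperty M
  w_id : ∀ X : M, W (𝟙 X)
  w_comp : ∀ {X Y Z : M} (f : X ⟶ Y) (g : Y ⟶ Z), W f → W g → W (f ≫ g)
  w_cancel_left : ∀ {X Y Z : M} (f : X ⟶ Y) (g : Y ⟶ Z), W f → W (f ≫ g) → W g
  w_cancel_right : ∀ {X Y Z : M} (f : X ⟶ Y) (g : Y ⟶ Z), W g → W (f ≫ g) → W f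
  w_retract : ∀ {X Y X' Y' : M} (f : X ⟶ Y) (f' : X' ⟶ Y') (s : X ⟶ X') (r : X' ⟶ X)
      (s' : Y ⟶ Y') (r' : Y' ⟶ Y), s ≫ r = 𝟙 X → s' ≫ r' = 𝟙 Y →
      s ≫ f' = f ≫ s' → f' ≫ r' = r ≫ f → W f' → W f
  cof_retract : ∀ {X Y X' Y' : M} (f : X ⟶ Y) (f' : X' ⟶ Y') (s : X ⟶ X') (r : X' ⟶ X)
      (s' : Y ⟶ Y') (r' : Y' ⟶ Y), s ≫ r = 𝟙 X → s' ≫ r' = 𝟙 Y →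
      s ≫ f' = f ≫ s' → f' ≫ r' = r ≫ f → Cof f' → Cof f
  fib_retract : ∀ {X Y X' Y' : M} (f : X ⟶ Y) (f' : X' ⟶ Y') (s : X ⟶ X') (r : X' ⟶ X)
      (s' : Y ⟶ Y') (r' : Y' ⟶ Y), s ≫ r = 𝟙 X → s' ≫ r' = 𝟙 Y →
      s ≫ f' = f ≫ s' → f' ≫ r' = r ≫ f → Fib f' → Fib f
  lift_cof_w_fib : ∀ {A B X Y : M} (i : A ⟶ B) (p : X ⟶ Y),
      Cof i → W i → Fib p → HasLiftingProperty i p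
  lift_cof_fib_w : ∀ {A B X Y : M} (i : A ⟶ B) (p : X ⟶ Y),
      Cof i → Fib p → W p → HasLiftingProperty i p
  fact_triv_cof_fib : ∀ {X Y : M} (f : X ⟶ Y),
      ∃ (Z : M) (i : X ⟶ Z) (p : Z ⟶ Y), Cof i ∧ W i ∧ Fib p ∧ i ≫ p = f
  fact_cof_triv_fib : ∀ {X Y : M} (f : X ⟶ Y),
      ∃ (Z : M) (i : X ⟶ Z) (p : Z ⟶ Y), Cof i ∧ Fib p ∧ W p ∧ i ≫ p = f

/-- A model structure is *right proper* if the pullback of a weak equivalence along a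
fibration is a weak equivalence. -/
def ModelStructure.RightProper (S : ModelStructure M) : Prop :=
  ∀ ⦃X' X Y' Y : M⦄ (i : X' ⟶ X) (g : X' ⟶ Y') (f : X ⟶ Y) (j : Y' ⟶ Y),
    IsPullback i g f j → S.Fib f → S.W j → S.W i

/-- A commutative square with corners `P, X, Y, B` is *homotopy cartesian* (with respect
to weak equivalences `W` and fibrations `F`) if for some factorizations `X ⟶ X' ⟶ B` of `f`
and `Y ⟶ Y' ⟶ B` of `g` into a weak equivalence followed by a fibration, the induced map
`P ⟶ X' ×_B Y'` is a weak equivalence. -/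
def HomotopyCartesian [HasPullbacks M] (W F : MorphismProperty M) {P X Y B : M}
    (h : P ⟶ X) (k : P ⟶ Y) (f : X ⟶ B) (g : Y ⟶ B) : Prop :=
  ∃ (X' Y' : M) (iX : X ⟶ X') (pX : X' ⟶ B) (iY : Y ⟶ Y') (pY : Y' ⟶ B)
    (_ : iX ≫ pX = f) (_ : iY ≫ pY = g)
    (w : (h ≫ iX) ≫ pX = (k ≫ iY) ≫ pY),
    W iX ∧ F pX ∧ W iY ∧ F pY ∧ W (pullback.lift (h ≫ iX) (k ≫ iY) w)

section Aux

/-- Lifting properties transfer along pullback squares: if `i` lifts against `g`, it lifts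
against any base change `a` of `g`. -/
lemma rlp_of_isPullback {P X Y Z A B' : M} {a : P ⟶ X} {b : P ⟶ Y} {f : X ⟶ Z} {g : Y ⟶ Z}
    (hP : IsPullback a b f g) (i : A ⟶ B') (hg : HasLiftingProperty i g) :
    HasLiftingProperty i a := by
  constructor
  intro u v sq
  have sq' : CommSq (u ≫ b) i g (v ≫ f) := ⟨by
    simp only [Category.assoc]
    rw [← hP.w, ← Category.assoc, sq.w, Category.assoc]⟩
  have hl := sq'.lift
  refine ⟨⟨⟨hP.lift v sq'.lift (sq'.fac_right).symm, ?_, ?_⟩⟩⟩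
  · apply hP.hom_ext
    · rw [Category.assoc, hP.lift_fst, sq.w]
    · rw [Category.assoc, hP.lift_snd, sq'.fac_left]
  · exact hP.lift_fst _ _ _

/-- A map with the right lifting property against all trivial cofibrations is a
fibration. -/
lemma fib_of_rlp (S : ModelStructure M) {X Y : M} {p : X ⟶ Y}
    (H : ∀ {A B' : M} (i : A ⟶ B'), S.Cof i → S.W i → HasLiftingProperty i p) :
    S.Fib p := by
  obtain ⟨Z, j, q, hjc, hjw, hqf, hjq⟩ := S.fact_triv_cof_fib p
  have : HasLiftingProperty j p := H j hjc hjw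
  have sq : CommSq (𝟙 X) j p q := ⟨by rw [Category.id_comp, hjq]⟩
  exact S.fib_retract p q j sq.lift (𝟙 Y) (𝟙 Y) sq.fac_left (Category.id_comp _)
    (by rw [hjq, Category.comp_id]) (by rw [Category.comp_id, sq.fac_right]) hqf

/-- A map with the right lifting property against all cofibrations is a trivial
fibration. -/
lemma trivfib_of_rlp (S : ModelStructure M) {X Y : M} {p : X ⟶ Y}
    (H : ∀ {A B' : M} (i : A ⟶ B'), S.Cof i → HasLiftingProperty i p) :
    S.Fib p ∧ S.W p := by
  obtain ⟨Z, j, q, hjc, hqf, hqw, hjq⟩ := S.fact_cof_triv_fib p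
  have : HasLiftingProperty j p := H j hjc
  have sq : CommSq (𝟙 X) j p q := ⟨by rw [Category.id_comp, hjq]⟩
  exact ⟨S.fib_retract p q j sq.lift (𝟙 Y) (𝟙 Y) sq.fac_left (Category.id_comp _)
      (by rw [hjq, Category.comp_id]) (by rw [Category.comp_id, sq.fac_right]) hqf,
    S.w_retract p q j sq.lift (𝟙 Y) (𝟙 Y) sq.fac_left (Category.id_comp _)
      (by rw [hjq, Category.comp_id]) (by rw [Category.comp_id, sq.fac_right]) hqw⟩

/-- Fibrations are stable under base change. -/
lemma fib_pullback (S : ModelStructure M) {P X Y Z : M} {a : P ⟶ X} {b : P ⟶ Y}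
    {f : X ⟶ Z} {g : Y ⟶ Z} (hP : IsPullback a b f g) (hg : S.Fib g) : S.Fib a :=
  fib_of_rlp S fun i hc hw => rlp_of_isPullback hP i (S.lift_cof_w_fib i g hc hw hg)

/-- Trivial fibrations are stable under base change. -/
lemma trivfib_pullback (S : ModelStructure M) {P X Y Z : M} {a : P ⟶ X} {b : P ⟶ Y}
    {f : X ⟶ Z} {g : Y ⟶ Z} (hP : IsPullback a b f g) (hgf : S.Fib g) (hgw : S.W g) :
    S.Fib a ∧ S.W a :=
  trivfib_of_rlp S fun i hc => rlp_of_isPullback hP i (S.lift_cof_fib_w i g hc hgf hgw)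

/-- Fibrations are closed under composition. -/
lemma fib_comp (S : ModelStructure M) {X Y Z : M} {p : X ⟶ Y} {q : Y ⟶ Z}
    (hp : S.Fib p) (hq : S.Fib q) : S.Fib (p ≫ q) :=
  fib_of_rlp S fun i hc hw => by
    have h1 : HasLiftingProperty i p := S.lift_cof_w_fib i p hc hw hp
    have h2 : HasLiftingProperty i q := S.lift_cof_w_fib i q hc hw hq
    infer_instance

/-- Comparison lemma: composing a map into a pullback with a pair of trivial
fibrations of the factors does not change whether it is a weak equivalence. -/
lemma comparison [HasFiniteLimits M] (S : ModelStructure M)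
    {P X' Y' B ZX ZY : M} (pX : X' ⟶ B) (pY : Y' ⟶ B)
    (zX : ZX ⟶ B) (zY : ZY ⟶ B) (qX : ZX ⟶ X') (qY : ZY ⟶ Y')
    (eX : qX ≫ pX = zX) (eY : qY ≫ pY = zY)
    (hqXf : S.Fib qX) (hqXw : S.W qX) (hqYf : S.Fib qY) (hqYw : S.W qY)
    (a : P ⟶ ZX) (b : P ⟶ ZY) (w1 : a ≫ zX = b ≫ zY)
    (w2 : (a ≫ qX) ≫ pX = (b ≫ qY) ≫ pY) :
    S.W (pullback.lift a b w1) ↔ S.W (pullback.lift (a ≫ qX) (b ≫ qY) w2) := by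
  subst eX eY
  have h1 : (pullback.fst (qX ≫ pX) (qY ≫ pY) ≫ qX) ≫ pX =
      pullback.snd (qX ≫ pX) (qY ≫ pY) ≫ (qY ≫ pY) := by
    rw [Category.assoc, pullback.condition]
  set c1 : pullback (qX ≫ pX) (qY ≫ pY) ⟶ pullback pX (qY ≫ pY) :=
    pullback.lift (pullback.fst (qX ≫ pX) (qY ≫ pY) ≫ qX)
      (pullback.snd (qX ≫ pX) (qY ≫ pY)) h1 with hc1
  have h2 : pullback.fst pX (qY ≫ pY) ≫ pX =
      (pullback.snd pX (qY ≫ pY) ≫ qY) ≫ pY := by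
    rw [Category.assoc, pullback.condition]
  set c2 : pullback pX (qY ≫ pY) ⟶ pullback pX pY :=
    pullback.lift (pullback.fst pX (qY ≫ pY)) (pullback.snd pX (qY ≫ pY) ≫ qY) h2 with hc2
  have hc1PB : IsPullback c1 (pullback.fst (qX ≫ pX) (qY ≫ pY))
      (pullback.fst pX (qY ≫ pY)) qX := by
    apply IsPullback.of_right _ (by rw [hc1]; exact pullback.lift_fst _ _ _) (IsPullback.of_hasPullback pX (qY ≫ pY)).flip
    have : c1 ≫ pullback.snd pX (qY ≫ pY) = pullback.snd (qX ≫ pX) (qY ≫ pY) := by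
      rw [hc1]; exact pullback.lift_snd _ _ _
    rw [this]
    exact (IsPullback.of_hasPullback (qX ≫ pX) (qY ≫ pY)).flip
  have hc2PB : IsPullback c2 (pullback.snd pX (qY ≫ pY))
      (pullback.snd pX pY) qY := by
    apply IsPullback.of_right _ (by rw [hc2]; exact pullback.lift_snd _ _ _) (IsPullback.of_hasPullback pX pY)
    have : c2 ≫ pullback.fst pX pY = pullback.fst pX (qY ≫ pY) := by rw [hc2]; exact pullback.lift_fst _ _ _
    rw [this]
    exact IsPullback.of_hasPullback pX (qY ≫ pY)
  have hW1 : S.W c1 := (trivfib_pullback S hc1PB hqXf hqXw).2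
  have hW2 : S.W c2 := (trivfib_pullback S hc2PB hqYf hqYw).2
  have hWc : S.W (c1 ≫ c2) := S.w_comp _ _ hW1 hW2
  have key : pullback.lift a b w1 ≫ (c1 ≫ c2) = pullback.lift (a ≫ qX) (b ≫ qY) w2 := by
    apply pullback.hom_ext
    · rw [hc1, hc2, Category.assoc, Category.assoc, pullback.lift_fst, pullback.lift_fst,
        pullback.lift_fst_assoc, pullback.lift_fst]
    · rw [hc1, hc2, Category.assoc, Category.assoc, pullback.lift_snd, pullback.lift_snd_assoc,
        pullback.lift_snd, pullback.lift_snd_assoc]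
  constructor
  · intro hw
    rw [← key]
    exact S.w_comp _ _ hw hWc
  · intro hw
    rw [← key] at hw
    exact S.w_cancel_right _ _ hWc hw

end Aux

/-- If for one pair of (weak equivalence, fibration)-factorizations of the two legs of a
commutative square the induced map to the pullback is a weak equivalence, then the same
holds for any other such pair of factorizations. -/
theorem statement1 [HasFiniteLimits M] [HasFiniteColimits M] (S : ModelStructure M)
    {P X Y B X' Y' X'' Y'' : M}
    (h : P ⟶ X) (k : P ⟶ Y) (f : X ⟶ B) (g : Y ⟶ B)
    (iX : X ⟶ X') (pX : X' ⟶ B) (iY : Y ⟶ Y') (pY : Y' ⟶ B)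
    (hX : iX ≫ pX = f) (hY : iY ≫ pY = g)
    (hiX : S.W iX) (hpX : S.Fib pX) (hiY : S.W iY) (hpY : S.Fib pY)
    (w : (h ≫ iX) ≫ pX = (k ≫ iY) ≫ pY)
    (hwe : S.W (pullback.lift (h ≫ iX) (k ≫ iY) w))
    (iX' : X ⟶ X'') (pX' : X'' ⟶ B) (iY' : Y ⟶ Y'') (pY' : Y'' ⟶ B)
    (hX' : iX' ≫ pX' = f) (hY' : iY' ≫ pY' = g)
    (hiX' : S.W iX') (hpX' : S.Fib pX') (hiY' : S.W iY') (hpY' : S.Fib pY')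
    (w' : (h ≫ iX') ≫ pX' = (k ≫ iY') ≫ pY') :
    S.W (pullback.lift (h ≫ iX') (k ≫ iY') w') := by
  -- common refinement on the X side
  have hfX : iX ≫ pX = iX' ≫ pX' := hX.trans hX'.symm
  obtain ⟨ZX, jX, qX0, hjXc, hjXw, hqX0f, hjqX⟩ :=
    S.fact_triv_cof_fib (pullback.lift iX iX' hfX)
  obtain ⟨qX1, hqX1⟩ : ∃ q : ZX ⟶ X', q = qX0 ≫ pullback.fst pX pX' := ⟨_, rfl⟩
  obtain ⟨qX2, hqX2⟩ : ∃ q : ZX ⟶ X'', q = qX0 ≫ pullback.snd pX pX' := ⟨_, rfl⟩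
  have e1X : jX ≫ qX1 = iX := by rw [hqX1, ← Category.assoc, hjqX, pullback.lift_fst]
  have e2X : jX ≫ qX2 = iX' := by rw [hqX2, ← Category.assoc, hjqX, pullback.lift_snd]
  have ezX : qX2 ≫ pX' = qX1 ≫ pX := by
    rw [hqX1, hqX2, Category.assoc, Category.assoc, pullback.condition]
  have hqX1f : S.Fib qX1 := by
    rw [hqX1]
    exact fib_comp S hqX0f (fib_pullback S (IsPullback.of_hasPullback pX pX') hpX')
  have hqX2f : S.Fib qX2 := by
    rw [hqX2]
    exact fib_comp S hqX0f (fib_pullback S (IsPullback.of_hasPullback pX pX').flip hpX)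
  have hqX1w : S.W qX1 := S.w_cancel_left jX qX1 hjXw (by rw [e1X]; exact hiX)
  have hqX2w : S.W qX2 := S.w_cancel_left jX qX2 hjXw (by rw [e2X]; exact hiX')
  -- common refinement on the Y side
  have hfY : iY ≫ pY = iY' ≫ pY' := hY.trans hY'.symm
  obtain ⟨ZY, jY, qY0, hjYc, hjYw, hqY0f, hjqY⟩ :=
    S.fact_triv_cof_fib (pullback.lift iY iY' hfY)
  obtain ⟨qY1, hqY1⟩ : ∃ q : ZY ⟶ Y', q = qY0 ≫ pullback.fst pY pY' := ⟨_, rfl⟩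
  obtain ⟨qY2, hqY2⟩ : ∃ q : ZY ⟶ Y'', q = qY0 ≫ pullback.snd pY pY' := ⟨_, rfl⟩
  have e1Y : jY ≫ qY1 = iY := by rw [hqY1, ← Category.assoc, hjqY, pullback.lift_fst]
  have e2Y : jY ≫ qY2 = iY' := by rw [hqY2, ← Category.assoc, hjqY, pullback.lift_snd]
  have ezY : qY2 ≫ pY' = qY1 ≫ pY := by
    rw [hqY1, hqY2, Category.assoc, Category.assoc, pullback.condition]
  have hqY1f : S.Fib qY1 := by
    rw [hqY1]
    exact fib_comp S hqY0f (fib_pullback S (IsPullback.of_hasPullback pY pY') hpY')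
  have hqY2f : S.Fib qY2 := by
    rw [hqY2]
    exact fib_comp S hqY0f (fib_pullback S (IsPullback.of_hasPullback pY pY').flip hpY)
  have hqY1w : S.W qY1 := S.w_cancel_left jY qY1 hjYw (by rw [e1Y]; exact hiY)
  have hqY2w : S.W qY2 := S.w_cancel_left jY qY2 hjYw (by rw [e2Y]; exact hiY')
  -- the three induced maps into pullbacks
  have wz2 : ((h ≫ jX) ≫ qX1) ≫ pX = ((k ≫ jY) ≫ qY1) ≫ pY := by
    rw [Category.assoc h, e1X, Category.assoc k, e1Y]; exact w
  have wz2' : ((h ≫ jX) ≫ qX2) ≫ pX' = ((k ≫ jY) ≫ qY2) ≫ pY' := by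
    rw [Category.assoc h, e2X, Category.assoc k, e2Y]; exact w'
  have wz : (h ≫ jX) ≫ (qX1 ≫ pX) = (k ≫ jY) ≫ (qY1 ≫ pY) := by
    rw [← Category.assoc (h ≫ jX), ← Category.assoc (k ≫ jY)]; exact wz2
  have hmid : S.W (pullback.lift (h ≫ jX) (k ≫ jY) wz) := by
    rw [comparison S pX pY (qX1 ≫ pX) (qY1 ≫ pY) qX1 qY1 rfl rfl hqX1f hqX1w hqY1f hqY1w
      (h ≫ jX) (k ≫ jY) wz wz2]
    have heq : pullback.lift ((h ≫ jX) ≫ qX1) ((k ≫ jY) ≫ qY1) wz2 =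
        pullback.lift (h ≫ iX) (k ≫ iY) w := by
      apply pullback.hom_ext <;> simp [Category.assoc, e1X, e1Y]
    rw [heq]; exact hwe
  have final := (comparison S pX' pY' (qX1 ≫ pX) (qY1 ≫ pY) qX2 qY2 ezX ezY hqX2f hqX2w
    hqY2f hqY2w (h ≫ jX) (k ≫ jY) wz wz2').mp hmid
  have heq : pullback.lift ((h ≫ jX) ≫ qX2) ((k ≫ jY) ≫ qY2) wz2' =
      pullback.lift (h ≫ iX') (k ≫ iY') w' := by
    apply pullback.hom_ext <;> simp [Category.assoc, e2X, e2Y]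
  rwa [heq] at final

end Paper
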